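/- For a prime p and n ≥ 3, the edge connectivity of the zero divisor graph Γ[Z_{p^n}] equals p - 1. -/

import Mathlib

/-- The nonzero zero divisors of `ZMod n`. -/
def ZeroDivisors (n : ℕ) : Set (ZMod n) :=
  {x | x ≠ 0 ∧ ∃ y : ZMod n, y ≠ 0 ∧ x * y = 0}

/-- The zero divisor graph of `ZMod n`: vertices are nonzero zero divisors,
distinct vertices adjacent iff their product is zero. -/
def zdGraph (n : ℕ) : SimpleGraph (ZeroDivisors n) where
  Adj u v := u ≠ v ∧ (u : ZMod n) * (v : ZMod n) = 0
  symm := ⟨fun u v h => ⟨h.1.symm, by rw [mul_comm]; exact h.2⟩⟩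
  loopless := ⟨fun u h => h.1 rfl⟩

/-- Vertex connectivity: smallest number of vertices whose deletion leaves a
disconnected graph or a single vertex. -/
noncomputable def vConn {V : Type*} (G : SimpleGraph V) : ℕ :=
  sInf { k | ∃ S : Set V, S.Finite ∧ S.ncard = k ∧
    (¬ (G.induce Sᶜ).Preconnected ∨ ∃ v : V, Sᶜ = {v}) }

/-- Edge connectivity: smallest number of edges whose deletion leaves a
disconnected graph or a graph with no edges. -/
noncomputable def eConn {V : Type*} (G : SimpleGraph V) : ℕ :=
  sInf { k | ∃ E : Set (Sym2 V), E ⊆ G.edgeSet ∧ E.Finite ∧ E.ncard = k ∧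
    (¬ (G.deleteEdges E).Preconnected ∨ G.deleteEdges E = ⊥) }

/-- Minimum degree of a graph. -/
noncomputable def minDeg {V : Type*} (G : SimpleGraph V) : ℕ :=
  sInf { k | ∃ v : V, (G.neighborSet v).ncard = k }

/- ------------------ auxiliary material ------------------ -/

lemma zdGraph_adj (m : ℕ) (u v : ZeroDivisors m) :
    (zdGraph m).Adj u v ↔ u ≠ v ∧ (u : ZMod m) * (v : ZMod m) = 0 := Iff.rfl

lemma no_step_eq {V : Type*} {G : SimpleGraph V} {u v : V}
    (h : ∀ b, ¬ G.Adj u b) (w : G.Walk u v) : u = v := by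
  cases w with
  | nil => rfl
  | cons h' _ => exact absurd h' (h _)

lemma two_path_reach {V : Type*} (G : SimpleGraph V) (E : Set (Sym2 V)) {u v w : V}
    (h1 : G.Adj u w) (h2 : G.Adj w v)
    (hE1 : s(u, w) ∉ E) (hE2 : s(w, v) ∉ E) :
    (G.deleteEdges E).Reachable u v :=
  ((SimpleGraph.deleteEdges_adj.mpr ⟨h1, hE1⟩).reachable).trans
    ((SimpleGraph.deleteEdges_adj.mpr ⟨h2, hE2⟩).reachable)

lemma blocked_card {V : Type*} (u v : V) (huv : u ≠ v) (W : Set V) (E : Set (Sym2 V))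
    (hE : E.Finite)
    (hW : ∀ w ∈ W, w ≠ u ∧ w ≠ v)
    (hblock : ∀ w ∈ W, s(u, w) ∈ E ∨ s(w, v) ∈ E) :
    W.ncard ≤ (E \ {s(u, v)}).ncard := by
  classical
  refine Set.ncard_le_ncard_of_injOn (fun w => if s(u, w) ∈ E then s(u, w) else s(w, v))
    ?_ ?_ hE.diff
  · intro w hw
    obtain ⟨hwu, hwv⟩ := hW w hw
    by_cases h : s(u, w) ∈ E
    · simp only [h, if_pos]
      refine ⟨h, ?_⟩
      simp only [Set.mem_singleton_iff, Sym2.eq_iff]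
      rintro (⟨-, h2⟩ | ⟨h1, -⟩)
      · exact hwv h2
      · exact huv h1
    · simp only [h, if_neg, if_false]
      refine ⟨(hblock w hw).resolve_left h, ?_⟩
      simp only [Set.mem_singleton_iff, Sym2.eq_iff]
      rintro (⟨h1, -⟩ | ⟨h1, h2⟩)
      · exact hwu h1
      · exact hwv h1
  · intro w1 hw1 w2 hw2 heq
    obtain ⟨h1u, h1v⟩ := hW w1 hw1
    obtain ⟨h2u, h2v⟩ := hW w2 hw2
    dsimp only at heq
    split_ifs at heq with ha hb hb
    · rw [Sym2.eq_iff] at heq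
      rcases heq with ⟨-, h⟩ | ⟨h1, h2⟩
      · exact h
      · exact h2.trans h1
    · rw [Sym2.eq_iff] at heq
      rcases heq with ⟨h1, h2⟩ | ⟨h1, -⟩
      · exact absurd h1.symm h2u
      · exact absurd h1 huv
    · rw [Sym2.eq_iff] at heq
      rcases heq with ⟨h1, h2⟩ | ⟨-, h2⟩
      · exact absurd h1 h1u
      · exact absurd h2.symm huv
    · rw [Sym2.eq_iff] at heq
      rcases heq with ⟨h1, -⟩ | ⟨h1, h2⟩
      · exact h1
      · exact absurd h1 h1v

section numbertheory

variable {p n : ℕ}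

lemma zd_mul_eq_zero (hp : p.Prime) (hn : 1 ≤ n) (x y : ZMod (p ^ n)) :
    x * y = 0 ↔ p ^ n ∣ x.val * y.val := by
  haveI : NeZero (p ^ n) := ⟨pow_ne_zero n hp.ne_zero⟩
  conv_lhs => rw [← ZMod.natCast_zmod_val x, ← ZMod.natCast_zmod_val y]
  rw [← Nat.cast_mul, ZMod.natCast_eq_zero_iff]

lemma pow_pred_mul (hn : 1 ≤ n) : p ^ (n - 1) * p = p ^ n := by
  rw [← pow_succ]; congr 1; omega

lemma pow_pred_lt (hp : p.Prime) (hn : 1 ≤ n) : p ^ (n - 1) < p ^ n :=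
  Nat.pow_lt_pow_right hp.one_lt (by omega)

lemma cpow_ne_zero (hp : p.Prime) (hn : 1 ≤ n) :
    ((p ^ (n - 1) : ℕ) : ZMod (p ^ n)) ≠ 0 := by
  rw [Ne, ZMod.natCast_eq_zero_iff]
  intro h
  exact absurd (Nat.le_of_dvd (pow_pos hp.pos _) h) (not_le.mpr (pow_pred_lt hp hn))

lemma cpow_val (hp : p.Prime) (hn : 1 ≤ n) :
    ((p ^ (n - 1) : ℕ) : ZMod (p ^ n)).val = p ^ (n - 1) :=
  ZMod.val_cast_of_lt (pow_pred_lt hp hn)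

lemma mem_zd_iff (hp : p.Prime) (hn : 1 ≤ n) (x : ZMod (p ^ n)) :
    x ∈ ZeroDivisors (p ^ n) ↔ x ≠ 0 ∧ p ∣ x.val := by
  haveI : NeZero (p ^ n) := ⟨pow_ne_zero n hp.ne_zero⟩
  constructor
  · rintro ⟨hx0, y, hy0, hxy⟩
    refine ⟨hx0, ?_⟩
    by_contra hpd
    have hu : IsUnit x := by
      rw [← ZMod.natCast_zmod_val x, ZMod.isUnit_iff_coprime]
      exact Nat.Coprime.pow_right n ((hp.coprime_iff_not_dvd.mpr hpd).symm)
    exact hy0 ((hu.mul_right_eq_zero).mp hxy)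
  · rintro ⟨hx0, c, hc⟩
    refine ⟨hx0, ((p ^ (n - 1) : ℕ) : ZMod (p ^ n)), cpow_ne_zero hp hn, ?_⟩
    rw [zd_mul_eq_zero hp hn, cpow_val hp hn, hc]
    exact ⟨c, by rw [← pow_pred_mul (p := p) hn]; ring⟩

/-- The set of nonzero multiples of `p^(n-1)` in `ZMod (p^n)`. -/
def Aset (p n : ℕ) : Set (ZMod (p ^ n)) := {x | x ≠ 0 ∧ p ^ (n - 1) ∣ x.val}

lemma Aset_subset (hp : p.Prime) (hn : 2 ≤ n) : Aset p n ⊆ ZeroDivisors (p ^ n) := by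
  rintro x ⟨hx0, hdvd⟩
  rw [mem_zd_iff hp (by omega)]
  exact ⟨hx0, dvd_trans (dvd_pow_self p (by omega)) hdvd⟩

lemma mul_zero_of_A (hp : p.Prime) (hn : 1 ≤ n) {x y : ZMod (p ^ n)}
    (hx : p ^ (n - 1) ∣ x.val) (hy : p ∣ y.val) : x * y = 0 := by
  rw [zd_mul_eq_zero hp hn]
  obtain ⟨a, ha⟩ := hx
  obtain ⟨b, hb⟩ := hy
  exact ⟨a * b, by rw [ha, hb, ← pow_pred_mul (p := p) hn]; ring⟩

lemma Aset_card (hp : p.Prime) (hn : 1 ≤ n) : (Aset p n).ncard = p - 1 := by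
  haveI : NeZero (p ^ n) := ⟨pow_ne_zero n hp.ne_zero⟩
  have hqpos : 0 < p ^ (n - 1) := pow_pos hp.pos _
  have himg : Aset p n
      = (fun k : ℕ => ((k * p ^ (n - 1) : ℕ) : ZMod (p ^ n))) '' ↑(Finset.Ico 1 p) := by
    ext x
    constructor
    · rintro ⟨hx0, k, hk⟩
      have hval : x.val < p ^ n := ZMod.val_lt x
      have hk0 : k ≠ 0 := by
        rintro rfl
        rw [mul_zero] at hk
        exact hx0 ((ZMod.val_eq_zero x).mp hk)
      have hkp : k < p := by
        by_contra hge
        push_neg at hge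
        have : p ^ n ≤ x.val := by
          rw [hk, ← pow_pred_mul (p := p) hn]
          calc p ^ (n - 1) * p ≤ p ^ (n - 1) * k := Nat.mul_le_mul_left _ hge
          _ = _ := by ring
        omega
      refine ⟨k, by simp [Finset.mem_Ico]; omega, ?_⟩
      show ((k * p ^ (n - 1) : ℕ) : ZMod (p ^ n)) = x
      rw [mul_comm, ← hk, ZMod.natCast_zmod_val]
    · rintro ⟨k, hk, rfl⟩
      simp only [Finset.coe_Ico, Set.mem_Ico] at hk
      have hlt : k * p ^ (n - 1) < p ^ n := by
        rw [← pow_pred_mul (p := p) hn, mul_comm (p ^ (n - 1)) p]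
        exact Nat.mul_lt_mul_of_lt_of_le hk.2 le_rfl (by positivity)
      have hval : ((k * p ^ (n - 1) : ℕ) : ZMod (p ^ n)).val = k * p ^ (n - 1) :=
        ZMod.val_cast_of_lt hlt
      constructor
      · rw [Ne, ← ZMod.val_eq_zero, hval]
        exact Nat.mul_ne_zero (by omega) hqpos.ne'
      · rw [hval]; exact ⟨k, mul_comm _ _⟩
  rw [himg, Set.ncard_image_of_injOn, Set.ncard_coe_finset, Nat.card_Ico]
  intro k1 h1 k2 h2 heq
  simp only [Finset.coe_Ico, Set.mem_Ico] at h1 h2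
  have hl1 : k1 * p ^ (n - 1) < p ^ n := by
    rw [← pow_pred_mul (p := p) hn, mul_comm (p ^ (n - 1)) p]
    exact Nat.mul_lt_mul_of_lt_of_le h1.2 le_rfl (by positivity)
  have hl2 : k2 * p ^ (n - 1) < p ^ n := by
    rw [← pow_pred_mul (p := p) hn, mul_comm (p ^ (n - 1)) p]
    exact Nat.mul_lt_mul_of_lt_of_le h2.2 le_rfl (by positivity)
  have := congrArg ZMod.val heq
  rw [ZMod.val_cast_of_lt hl1, ZMod.val_cast_of_lt hl2] at this
  exact Nat.eq_of_mul_eq_mul_right hqpos this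

end numbertheory

/- ------------------ the theorem ------------------ -/

/-- for n ≥ 3, κₑ(Γ[Z_{pⁿ}]) = p - 1. -/
theorem stmt7 (p n : ℕ) (hp : p.Prime) (hn : 3 ≤ n) :
    eConn (zdGraph (p ^ n)) = p - 1 := by
  classical
  haveI : NeZero (p ^ n) := ⟨pow_ne_zero n hp.ne_zero⟩
  haveI : Finite (ZMod (p ^ n)) := Finite.of_fintype _
  set G := zdGraph (p ^ n) with hG
  have hp2 : 2 ≤ p := hp.two_le
  have hn1 : 1 ≤ n := by omega
  -- vertex-level A set
  set Av : Set (ZeroDivisors (p ^ n)) :=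
    {w : ZeroDivisors (p ^ n) | (w : ZMod (p ^ n)) ∈ Aset p n} with hAv
  have hAvcard : Av.ncard = p - 1 := by
    have himg : Subtype.val '' Av = Aset p n := by
      ext x
      constructor
      · rintro ⟨w, hw, rfl⟩; exact hw
      · intro hx
        exact ⟨⟨x, Aset_subset hp (by omega) hx⟩, hx, rfl⟩
    rw [← Aset_card hp hn1, ← himg, Set.ncard_image_of_injective _ Subtype.coe_injective]
  -- core adjacency: an element of Av is adjacent to every other vertex
  have hadj : ∀ a b : ZeroDivisors (p ^ n), a ≠ b → (a : ZMod (p ^ n)) ∈ Aset p n →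
      G.Adj a b := by
    intro a b hab ha
    refine ⟨hab, mul_zero_of_A hp hn1 ha.2 ?_⟩
    exact ((mem_zd_iff hp hn1 _).mp b.2).2
  -- the vertex p
  have hpval : ((p : ℕ) : ZMod (p ^ n)).val = p := by
    apply ZMod.val_cast_of_lt
    calc p = p ^ 1 := (pow_one p).symm
    _ < p ^ n := Nat.pow_lt_pow_right hp.one_lt (by omega)
  have hpmem : ((p : ℕ) : ZMod (p ^ n)) ∈ ZeroDivisors (p ^ n) := by
    rw [mem_zd_iff hp hn1]
    constructor
    · rw [Ne, ← ZMod.val_eq_zero, hpval]; omega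
    · rw [hpval]
  set x₀ : ZeroDivisors (p ^ n) := ⟨((p : ℕ) : ZMod (p ^ n)), hpmem⟩ with hx₀
  have hx₀A : (x₀ : ZMod (p ^ n)) ∉ Aset p n := by
    rintro ⟨-, hdvd⟩
    rw [hpval] at hdvd
    have h1 : p ^ (n - 1) ≤ p := Nat.le_of_dvd hp.pos hdvd
    have h2 : p ^ 1 < p ^ (n - 1) := Nat.pow_lt_pow_right hp.one_lt (by omega)
    rw [pow_one] at h2
    omega
  -- the vertex p^(n-1)
  have hcA : ((p ^ (n - 1) : ℕ) : ZMod (p ^ n)) ∈ Aset p n := by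
    refine ⟨cpow_ne_zero hp hn1, ?_⟩
    rw [cpow_val hp hn1]
  set c₀ : ZeroDivisors (p ^ n) :=
    ⟨((p ^ (n - 1) : ℕ) : ZMod (p ^ n)), Aset_subset hp (by omega) hcA⟩ with hc₀
  have hx₀c₀ : x₀ ≠ c₀ := by
    intro h
    exact hx₀A (h ▸ hcA)
  -- reachability lemma: deleting at most p-2 edges keeps everything connected
  have hreach : ∀ E : Set (Sym2 (ZeroDivisors (p ^ n))), E.ncard ≤ p - 2 →
      ∀ u v : ZeroDivisors (p ^ n), (G.deleteEdges E).Reachable u v := by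
    intro E hEcard u v
    by_cases huv : u = v
    · subst huv; exact SimpleGraph.Reachable.refl _
    by_contra hnr
    have hblock : ∀ w : ZeroDivisors (p ^ n), G.Adj u w → G.Adj w v →
        (s(u, w) ∈ E ∨ s(w, v) ∈ E) := by
      intro w h1 h2
      by_contra hc
      push_neg at hc
      exact hnr (two_path_reach G E h1 h2 hc.1 hc.2)
    have hdirect : G.Adj u v → s(u, v) ∈ E := by
      intro h
      by_contra hc
      exact hnr (SimpleGraph.deleteEdges_adj.mpr ⟨h, hc⟩).reachable
    set W : Set (ZeroDivisors (p ^ n)) :=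
      {w | w ≠ u ∧ w ≠ v ∧ G.Adj u w ∧ G.Adj w v} with hW
    have hWle : W.ncard ≤ (E \ {s(u, v)}).ncard := by
      apply blocked_card u v huv W E (Set.toFinite E)
      · intro w hw; exact ⟨hw.1, hw.2.1⟩
      · intro w hw; exact hblock w hw.2.2.1 hw.2.2.2
    have hEdle : (E \ {s(u, v)}).ncard ≤ E.ncard := Set.ncard_le_ncard (by simp)
    by_cases hu : (u : ZMod (p ^ n)) ∈ Aset p n
    · -- u ∈ A : direct edge exists
      have hAuv : G.Adj u v := hadj u v huv hu
      have hsE : s(u, v) ∈ E := hdirect hAuv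
      have hEd : (E \ {s(u, v)}).ncard = E.ncard - 1 :=
        Set.ncard_diff_singleton_of_mem hsE
      have hEpos : 0 < E.ncard := (Set.ncard_pos (Set.toFinite E)).mpr ⟨_, hsE⟩
      by_cases hv : (v : ZMod (p ^ n)) ∈ Aset p n
      · -- both in A
        set B : Set (ZeroDivisors (p ^ n)) := insert x₀ ((Av \ {u}) \ {v}) with hB
        have hx₀u : x₀ ≠ u := fun h => hx₀A (h ▸ hu)
        have hx₀v : x₀ ≠ v := fun h => hx₀A (h ▸ hv)
        have hBsub : B ⊆ W := by
          intro w hw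
          rcases hw with h | ⟨⟨hwA, hwu⟩, hwv⟩
          · subst h
            exact ⟨hx₀u, hx₀v, hadj u x₀ hx₀u.symm hu, (hadj v x₀ hx₀v.symm hv).symm⟩
          · simp only [Set.mem_singleton_iff] at hwu hwv
            exact ⟨hwu, hwv, hadj u w (fun h => hwu h.symm) hu, hadj w v hwv hwA⟩
        have hx₀B : x₀ ∉ (Av \ {u}) \ {v} := fun h => hx₀A h.1.1
        have hBcard : B.ncard = ((Av \ {u}) \ {v}).ncard + 1 :=
          Set.ncard_insert_of_notMem hx₀B (Set.toFinite _)
        have h1 : (Av \ {u}).ncard = (p - 1) - 1 := by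
          rw [Set.ncard_diff_singleton_of_mem (show u ∈ Av from hu), hAvcard]
        have hvm : v ∈ Av \ {u} := ⟨hv, fun h => huv (Set.mem_singleton_iff.mp h).symm⟩
        have _ := hvm
        have h2 : ((Av \ {u}) \ {v}).ncard = (p - 1) - 1 - 1 := by
          rw [Set.ncard_diff_singleton_of_mem hvm, h1]
        have h3 : 0 < (Av \ {u}).ncard :=
          (Set.ncard_pos (Set.toFinite _)).mpr ⟨_, hvm⟩
        have hle : B.ncard ≤ W.ncard := Set.ncard_le_ncard hBsub (Set.toFinite _)
        omega
      · -- u ∈ A, v ∉ A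
        set B : Set (ZeroDivisors (p ^ n)) := Av \ {u} with hB
        have hBsub : B ⊆ W := by
          rintro w ⟨hwA, hwu⟩
          simp only [Set.mem_singleton_iff] at hwu
          have hwv : w ≠ v := fun h => hv (h ▸ hwA)
          exact ⟨hwu, hwv, hadj u w (fun h => hwu h.symm) hu, hadj w v hwv hwA⟩
        have h1 : B.ncard = (p - 1) - 1 := by
          rw [hB, Set.ncard_diff_singleton_of_mem (show u ∈ Av from hu), hAvcard]
        have hle : B.ncard ≤ W.ncard := Set.ncard_le_ncard hBsub (Set.toFinite _)
        omega
    · by_cases hv : (v : ZMod (p ^ n)) ∈ Aset p n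
      · -- v ∈ A, u ∉ A
        have hAuv : G.Adj u v := (hadj v u (Ne.symm huv) hv).symm
        have hsE : s(u, v) ∈ E := hdirect hAuv
        have hEd : (E \ {s(u, v)}).ncard = E.ncard - 1 :=
          Set.ncard_diff_singleton_of_mem hsE
        have hEpos : 0 < E.ncard := (Set.ncard_pos (Set.toFinite E)).mpr ⟨_, hsE⟩
        set B : Set (ZeroDivisors (p ^ n)) := Av \ {v} with hB
        have hBsub : B ⊆ W := by
          rintro w ⟨hwA, hwv⟩
          simp only [Set.mem_singleton_iff] at hwv
          have hwu : w ≠ u := fun h => hu (h ▸ hwA)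
          exact ⟨hwu, hwv, (hadj w u hwu hwA).symm,
            (hadj v w (fun h => hwv h.symm) hv).symm⟩
        have h1 : B.ncard = (p - 1) - 1 := by
          rw [hB, Set.ncard_diff_singleton_of_mem (show v ∈ Av from hv), hAvcard]
        have hle : B.ncard ≤ W.ncard := Set.ncard_le_ncard hBsub (Set.toFinite _)
        omega
      · -- neither in A
        have hBsub : Av ⊆ W := by
          intro w hwA
          have hwu : w ≠ u := fun h => hu (h ▸ hwA)
          have hwv : w ≠ v := fun h => hv (h ▸ hwA)
          exact ⟨hwu, hwv, (hadj w u hwu hwA).symm, hadj w v hwv hwA⟩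
        have hle : Av.ncard ≤ W.ncard := Set.ncard_le_ncard hBsub (Set.toFinite _)
        omega
  -- the disconnecting edge set: all edges at x₀
  set E₀ : Set (Sym2 (ZeroDivisors (p ^ n))) :=
    (fun w => s(x₀, w)) '' (G.neighborSet x₀) with hE₀
  have hNbr : G.neighborSet x₀ = Av := by
    ext w
    constructor
    · rintro ⟨hne, hmul⟩
      refine ⟨((mem_zd_iff hp hn1 _).mp w.2).1, ?_⟩
      rw [zd_mul_eq_zero hp hn1] at hmul
      rw [hx₀] at hmul
      simp only [hpval] at hmul
      have e : p * p ^ (n - 1) = p ^ n := by rw [mul_comm]; exact pow_pred_mul hn1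
      obtain ⟨c, hc⟩ := hmul
      refine ⟨c, ?_⟩
      have e2 : p ^ n * c = p * (p ^ (n - 1) * c) := by rw [← e]; ring
      exact Nat.eq_of_mul_eq_mul_left hp.pos (hc.trans e2)
    · intro hw
      have hne : w ≠ x₀ := fun h => hx₀A (h ▸ hw)
      exact (hadj w x₀ hne hw).symm
  have hE₀card : E₀.ncard = p - 1 := by
    rw [hE₀, Set.ncard_image_of_injOn, hNbr, hAvcard]
    intro w1 h1 w2 h2 heq
    rw [Sym2.eq_iff] at heq
    rcases heq with ⟨-, h⟩ | ⟨ha, hb⟩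
    · exact h
    · exact hb.trans ha
  have hE₀sub : E₀ ⊆ G.edgeSet := by
    rintro e ⟨w, hw, rfl⟩
    exact hw
  have hmem : (p - 1) ∈ { k | ∃ E : Set (Sym2 (ZeroDivisors (p ^ n))), E ⊆ G.edgeSet ∧
      E.Finite ∧ E.ncard = k ∧
      (¬ (G.deleteEdges E).Preconnected ∨ G.deleteEdges E = ⊥) } := by
    refine ⟨E₀, hE₀sub, Set.toFinite _, hE₀card, Or.inl ?_⟩
    intro hP
    have hkey : ∀ b, ¬ (G.deleteEdges E₀).Adj x₀ b := by
      intro b hb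
      rw [SimpleGraph.deleteEdges_adj] at hb
      exact hb.2 ⟨b, hb.1, rfl⟩
    obtain ⟨w⟩ := hP x₀ c₀
    exact hx₀c₀ (no_step_eq hkey w)
  show sInf _ = p - 1
  apply le_antisymm
  · exact Nat.sInf_le hmem
  · apply le_csInf ⟨_, hmem⟩
    rintro k ⟨E, hsub, hfin, hcard, hdis⟩
    by_contra hlt
    push_neg at hlt
    have hEcard : E.ncard ≤ p - 2 := by omega
    rcases hdis with hnp | hbot
    · exact hnp (fun u v => hreach E hEcard u v)
    · have := hreach E hEcard x₀ c₀
      rw [hbot] at this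
      exact hx₀c₀ (SimpleGraph.reachable_bot.mp this)
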